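/- Let a < 0, ε ≥ 0, q > 1 with aq + ε + 1 < 0, and let μ_n = ν_n = 1 + n. Define β_m = μ_{m−1}^a / (ν_{m−1}^{ε(1+1/q)} (Σ_{k=m}^∞ μ_k^{aq} ν_k^ε)^{1/q}). Then for every m ≥ 1: 2^{a + ε/q + 1/q} |aq + ε + 1|^{1/q} (1+m)^{−ε(1+2/q) − 1/q} ≤ β_m ≤ (|aq + ε + 1|^{1/q} / 2^{a − ε(1+1/q)}) (1+m)^{−ε(1+2/q) − 1/q}. -/

import Mathlib

open Real Filter Finset

/-- A growth rate: an increasing sequence with `μ 0 ≥ 1` and `μ n → ∞`. -/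
structure GrowthRate (μ : ℕ → ℝ) : Prop where
  mono : StrictMono μ
  one_le : 1 ≤ μ 0
  tendsto_atTop : Filter.Tendsto μ Filter.atTop Filter.atTop

/-- `calA A m n = A (m-1) ∘ ⋯ ∘ A n` (identity when `m ≤ n`). -/
def calA {X : Type*} [NormedAddCommGroup X] [NormedSpace ℝ X]
    (A : ℕ → X ≃L[ℝ] X) (m n : ℕ) : X →L[ℝ] X :=
  (List.range (m - n)).foldl
    (fun B k => ((A (n + k) : X →L[ℝ] X)).comp B) (ContinuousLinearMap.id ℝ X)

/-- `calAinv A m n = (calA A m n)⁻¹ = A n⁻¹ ∘ ⋯ ∘ A (m-1)⁻¹`. -/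
def calAinv {X : Type*} [NormedAddCommGroup X] [NormedSpace ℝ X]
    (A : ℕ → X ≃L[ℝ] X) (m n : ℕ) : X →L[ℝ] X :=
  (List.range (m - n)).foldl
    (fun B k => B.comp ((A (n + k)).symm : X →L[ℝ] X)) (ContinuousLinearMap.id ℝ X)

/-- The complementary projection `Q m = Id - P m`. -/
def Qproj {X : Type*} [NormedAddCommGroup X] [NormedSpace ℝ X]
    (P : ℕ → X →L[ℝ] X) (m : ℕ) : X →L[ℝ] X :=
  ContinuousLinearMap.id ℝ X - P m

/-- The linear equation `x_{m+1} = A_m x_m` admits a nonuniform (μ,ν)-dichotomy with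
projections `P`, and constants `a < 0 ≤ b`, `ε ≥ 0`, `D ≥ 1`. -/
structure Dichotomy {X : Type*} [NormedAddCommGroup X] [NormedSpace ℝ X]
    (A : ℕ → X ≃L[ℝ] X) (P : ℕ → X →L[ℝ] X)
    (μ ν : ℕ → ℝ) (a b ε D : ℝ) : Prop where
  ha : a < 0
  hb : 0 ≤ b
  hε : 0 ≤ ε
  hD : 1 ≤ D
  idem : ∀ m : ℕ, (P m).comp (P m) = P m
  comm : ∀ m n : ℕ, n ≤ m → (P m).comp (calA A m n) = (calA A m n).comp (P n)
  boundP : ∀ m n : ℕ, 1 ≤ n → n ≤ m →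
    ‖(calA A m n).comp (P n)‖ ≤ D * (μ m / μ (n - 1)) ^ a * ν (n - 1) ^ ε
  boundQ : ∀ m n : ℕ, 1 ≤ n → n ≤ m →
    ‖(calAinv A m n).comp (Qproj P m)‖ ≤ D * (μ (m - 1) / μ n) ^ (-b) * ν (m - 1) ^ ε

/-- The class 𝒫_{c,q} of admissible perturbations. -/
def IsPerturbation {X : Type*} [NormedAddCommGroup X] [NormedSpace ℝ X]
    (f : ℕ → X → X) (c q : ℝ) : Prop :=
  ∀ n : ℕ, f n 0 = 0 ∧ ∀ u v : X, ‖f n u - f n v‖ ≤ c * ‖u - v‖ * (‖u‖ + ‖v‖) ^ q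

/-- The sequence `β` of the stable manifold theorem. -/
noncomputable def betaSeq (μ ν : ℕ → ℝ) (a ε q : ℝ) (m : ℕ) : ℝ :=
  μ (m - 1) ^ a /
    (ν (m - 1) ^ (ε * (1 + 1 / q)) *
      (∑' k : {k : ℕ // m ≤ k}, μ k.1 ^ (a * q) * ν k.1 ^ ε) ^ (1 / q))

/-- Membership in 𝒳_{δ,β}: a sequence of continuous maps `φ n : B_n(δ β_n) → F_n`
vanishing at `0` and Lipschitz with constant `1`.  (Here `E n` is the range of `P n`,
identified with the fixed-point set of `P n`, and `F n = ker (P n)`.) -/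
def MemX {X : Type*} [NormedAddCommGroup X] [NormedSpace ℝ X]
    (P : ℕ → X →L[ℝ] X) (δ : ℝ) (β : ℕ → ℝ) (φ : ℕ → X → X) : Prop :=
  ∀ n : ℕ, 1 ≤ n →
    φ n 0 = 0 ∧
    (∀ ξ : X, P n ξ = ξ → ‖ξ‖ < δ * β n → P n (φ n ξ) = 0) ∧
    (∀ ξ ξ' : X, P n ξ = ξ → P n ξ' = ξ' → ‖ξ‖ < δ * β n → ‖ξ'‖ < δ * β n →
      ‖φ n ξ - φ n ξ'‖ ≤ ‖ξ - ξ'‖) ∧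
    ContinuousOn (φ n) {ξ : X | P n ξ = ξ ∧ ‖ξ‖ < δ * β n}

/-- Membership in 𝒳*_{δ,β}: maps `φ n : E n → F n` restricting on the balls to an element
of 𝒳_{δ,β} and radially extended outside the balls. -/
def MemXstar {X : Type*} [NormedAddCommGroup X] [NormedSpace ℝ X]
    (P : ℕ → X →L[ℝ] X) (δ : ℝ) (β : ℕ → ℝ) (φ : ℕ → X → X) : Prop :=
  MemX P δ β φ ∧
    ∀ n : ℕ, 1 ≤ n → ∀ ξ : X, P n ξ = ξ →
      P n (φ n ξ) = 0 ∧ (¬ ‖ξ‖ < δ * β n → φ n ξ = φ n ((δ * β n / ‖ξ‖) • ξ))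

/-- Membership in ℬ_{n,δ,β}. -/
def MemB {X : Type*} [NormedAddCommGroup X] [NormedSpace ℝ X]
    (P : ℕ → X →L[ℝ] X) (μ ν : ℕ → ℝ) (a ε C δ : ℝ) (β : ℕ → ℝ)
    (n : ℕ) (x : ℕ → X → X) : Prop :=
  (∀ ξ : X, P n ξ = ξ → ‖ξ‖ < δ * β n → x n ξ = ξ) ∧
  (∀ m : ℕ, n ≤ m → x m 0 = 0) ∧
  (∀ m : ℕ, n ≤ m → ∀ ξ : X, P n ξ = ξ → ‖ξ‖ < δ * β n → P m (x m ξ) = x m ξ) ∧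
  (∀ m : ℕ, n ≤ m → ∀ ξ ξ' : X, P n ξ = ξ → P n ξ' = ξ' →
    ‖ξ‖ < δ * β n → ‖ξ'‖ < δ * β n →
    ‖x m ξ - x m ξ'‖ ≤ C * (μ m / μ (n - 1)) ^ a * ν (n - 1) ^ ε * ‖ξ - ξ'‖)

/-- The metric `‖φ − ψ‖′` on 𝒳_{δ,β}. -/
noncomputable def distX {X : Type*} [NormedAddCommGroup X] [NormedSpace ℝ X]
    (P : ℕ → X →L[ℝ] X) (δ : ℝ) (β : ℕ → ℝ) (φ ψ : ℕ → X → X) : ℝ :=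
  sSup {r : ℝ | ∃ n : ℕ, 1 ≤ n ∧ ∃ ξ : X, P n ξ = ξ ∧ ‖ξ‖ < δ * β n ∧ ξ ≠ 0 ∧
    r = ‖φ n ξ - ψ n ξ‖ / ‖ξ‖}

/-- The metric `‖x − y‖″` on ℬ_{n,δ,β}. -/
noncomputable def distB {X : Type*} [NormedAddCommGroup X] [NormedSpace ℝ X]
    (P : ℕ → X →L[ℝ] X) (μ ν : ℕ → ℝ) (a ε δ : ℝ) (β : ℕ → ℝ)
    (n : ℕ) (x y : ℕ → X → X) : ℝ :=
  sSup {r : ℝ | ∃ m : ℕ, n ≤ m ∧ ∃ ξ : X, P n ξ = ξ ∧ ‖ξ‖ < δ * β n ∧ ξ ≠ 0 ∧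
    r = ‖x m ξ - y m ξ‖ / ‖ξ‖ * (μ m / μ (n - 1)) ^ (-a) * ν (n - 1) ^ (-ε)}

/-- `x` solves the fixed point equation (eq:dyn-split2a) for `φ` at base time `n`:
`x m ξ = 𝒜_{m,n} ξ + ∑_{k=n}^{m-1} 𝒜_{m,k+1} P_{k+1} f_k (x_k ξ + φ_k (x_k ξ))`. -/
def SolvesEq {X : Type*} [NormedAddCommGroup X] [NormedSpace ℝ X]
    (A : ℕ → X ≃L[ℝ] X) (P : ℕ → X →L[ℝ] X) (f : ℕ → X → X)
    (δ : ℝ) (β : ℕ → ℝ) (n : ℕ) (φ : ℕ → X → X) (x : ℕ → X → X) : Prop :=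
  ∀ m : ℕ, n ≤ m → ∀ ξ : X, P n ξ = ξ → ‖ξ‖ < δ * β n →
    x m ξ = calA A m n ξ +
      ∑ k ∈ Finset.Ico n m, calA A m (k + 1) (P (k + 1) (f k (x k ξ + φ k (x k ξ))))

/-- The perturbed dynamics `ℱ_{m,n} = (A_{m-1} + f_{m-1}) ∘ ⋯ ∘ (A_n + f_n)`. -/
def calF {X : Type*} [NormedAddCommGroup X] [NormedSpace ℝ X]
    (A : ℕ → X ≃L[ℝ] X) (f : ℕ → X → X) (m n : ℕ) : X → X :=
  (List.range (m - n)).foldl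
    (fun g k => (fun y : X => A (n + k) y + f (n + k) y) ∘ g) id

/-- The metric `‖f − g‖‴` on 𝒫_{c,q}. -/
noncomputable def distP {X : Type*} [NormedAddCommGroup X] [NormedSpace ℝ X]
    (f g : ℕ → X → X) (q : ℝ) : ℝ :=
  sSup {r : ℝ | ∃ n : ℕ, 1 ≤ n ∧ ∃ u : X, u ≠ 0 ∧ r = ‖f n u - g n u‖ / ‖u‖ ^ (q + 1)}

open Real Set Filter in
private lemma mvt_rpow_aux {s : ℝ} (hs : s < 0) {c : ℝ} (hc : 0 < c) :
    (-s) * (c + 1) ^ (s - 1) ≤ c ^ s - (c + 1) ^ s ∧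
      c ^ s - (c + 1) ^ s ≤ (-s) * c ^ (s - 1) := by
  have hlt : c < c + 1 := by linarith
  obtain ⟨ξ, hξ, hder⟩ := exists_hasDerivAt_eq_slope (fun x => x ^ s)
    (fun x => s * x ^ (s - 1)) hlt
    (by
      apply ContinuousOn.rpow_const continuousOn_id
      intro x hx; left; exact ne_of_gt (lt_of_lt_of_le hc hx.1))
    (fun x hx => Real.hasDerivAt_rpow_const (Or.inl (ne_of_gt (hc.trans hx.1))))
  have hξ0 : 0 < ξ := hc.trans hξ.1
  have key : c ^ s - (c + 1) ^ s = (-s) * ξ ^ (s - 1) := by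
    have h2 : s * ξ ^ (s-1) = ((c+1)^s - c^s) / (c + 1 - c) := hder
    rw [show c + 1 - c = 1 by ring, div_one] at h2
    linarith
  constructor
  · rw [key]
    exact mul_le_mul_of_nonneg_left
      (Real.rpow_le_rpow_of_nonpos hξ0 hξ.2.le (by linarith)) (by linarith)
  · rw [key]
    exact mul_le_mul_of_nonneg_left
      (Real.rpow_le_rpow_of_nonpos hc hξ.1.le (by linarith)) (by linarith)

open Real Set Filter in
private lemma sum_bounds_aux {p : ℝ} (hp : p < -1) {m : ℕ} (hm : 1 ≤ m) :
    Summable (fun j : ℕ => ((m : ℝ) + j + 1) ^ p) ∧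
    ((m : ℝ) + 1) ^ (p+1) / (-(p+1)) ≤ ∑' j : ℕ, ((m : ℝ) + j + 1) ^ p ∧
    ∑' j : ℕ, ((m : ℝ) + j + 1) ^ p ≤ (m : ℝ) ^ (p+1) / (-(p+1)) := by
  have hs : p + 1 < 0 := by linarith
  have hs0 : (0:ℝ) < -(p+1) := by linarith
  have hm0 : (0:ℝ) < m := by exact_mod_cast hm
  have hg : Summable (fun j : ℕ => ((m : ℝ) + j + 1) ^ p) := by
    have h0 : Summable (fun n : ℕ => (n : ℝ) ^ p) := Real.summable_nat_rpow.2 hp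
    have := h0.comp_injective (add_left_injective (m+1))
    refine this.congr fun j => ?_
    simp only [Function.comp]
    push_cast
    ring_nf
  have hgnn : ∀ j : ℕ, 0 ≤ ((m : ℝ) + j + 1) ^ p := fun j =>
    Real.rpow_nonneg (by positivity) p
  refine ⟨hg, ?_, ?_⟩
  · set F : ℕ → ℝ := fun j => ((m : ℝ) + 1 + j) ^ (p+1) with hF
    have hterm : ∀ j : ℕ, (F j - F (j+1)) / (-(p+1)) ≤ ((m : ℝ) + j + 1) ^ p := by
      intro j
      have hc : (0:ℝ) < (m : ℝ) + 1 + j := by positivity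
      have := (mvt_rpow_aux hs hc).2
      rw [div_le_iff₀ hs0]
      have e1 : F j = ((m:ℝ) + 1 + j) ^ (p+1) := rfl
      have e2 : F (j+1) = (((m:ℝ) + 1 + j) + 1) ^ (p+1) := by
        simp only [hF]; push_cast; ring_nf
      have e3 : ((m:ℝ) + j + 1) ^ p = ((m:ℝ) + 1 + j) ^ ((p+1) - 1) := by
        ring_nf
      rw [e1, e2, e3]
      linarith [this]
    have hpart : ∀ N : ℕ, (F 0 - F N) / (-(p+1)) ≤ ∑' j : ℕ, ((m : ℝ) + j + 1) ^ p := by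
      intro N
      calc (F 0 - F N) / (-(p+1))
          = ∑ j ∈ Finset.range N, (F j - F (j+1)) / (-(p+1)) := by
            rw [← Finset.sum_div, Finset.sum_range_sub' F N]
        _ ≤ ∑ j ∈ Finset.range N, ((m : ℝ) + j + 1) ^ p :=
            Finset.sum_le_sum fun j _ => hterm j
        _ ≤ ∑' j : ℕ, ((m : ℝ) + j + 1) ^ p :=
            Summable.sum_le_tsum _ (fun i _ => hgnn i) hg
    have hFlim : Tendsto (fun N : ℕ => (F 0 - F N) / (-(p+1))) atTop
        (nhds ((F 0 - 0) / (-(p+1)))) := by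
      apply Tendsto.div_const
      apply Tendsto.const_sub
      have h1 : Tendsto (fun N : ℕ => (m : ℝ) + 1 + N) atTop atTop :=
        tendsto_atTop_add_const_left _ _ tendsto_natCast_atTop_atTop
      have h2 : Tendsto (fun x : ℝ => x ^ (p+1)) atTop (nhds 0) := by
        have := tendsto_rpow_neg_atTop (y := -(p+1)) hs0
        simpa using this
      exact h2.comp h1
    have := le_of_tendsto hFlim (Filter.Eventually.of_forall hpart)
    simpa [hF] using this
  · set f : ℕ → ℝ := fun j => ((m : ℝ) + j) ^ (p+1) with hf
    have hterm : ∀ j : ℕ, ((m : ℝ) + j + 1) ^ p ≤ (f j - f (j+1)) / (-(p+1)) := by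
      intro j
      have hc : (0:ℝ) < (m : ℝ) + j := by positivity
      have := (mvt_rpow_aux hs hc).1
      rw [le_div_iff₀ hs0]
      have e2 : f (j+1) = (((m:ℝ) + j) + 1) ^ (p+1) := by
        simp only [hf]; push_cast; ring_nf
      have e3 : ((m:ℝ) + j + 1) ^ p = (((m:ℝ) + j) + 1) ^ ((p+1) - 1) := by
        ring_nf
      rw [e2, e3]
      linarith [this]
    apply Summable.tsum_le_of_sum_le hg
    intro u
    obtain ⟨N, hN⟩ := u.exists_nat_subset_range
    calc ∑ j ∈ u, ((m : ℝ) + j + 1) ^ p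
        ≤ ∑ j ∈ Finset.range N, ((m : ℝ) + j + 1) ^ p :=
          Finset.sum_le_sum_of_subset_of_nonneg hN (fun i _ _ => hgnn i)
      _ ≤ ∑ j ∈ Finset.range N, (f j - f (j+1)) / (-(p+1)) :=
          Finset.sum_le_sum fun j _ => hterm j
      _ = (f 0 - f N) / (-(p+1)) := by
          rw [← Finset.sum_div, Finset.sum_range_sub' f N]
      _ ≤ (m : ℝ) ^ (p+1) / (-(p+1)) := by
          apply div_le_div_of_nonneg_right ?_ hs0.le
          have : 0 ≤ f N := Real.rpow_nonneg (by positivity) _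
          have e0 : f 0 = (m:ℝ) ^ (p+1) := by simp [hf]
          linarith

private def shiftEquiv' (m : ℕ) : ℕ ≃ {k : ℕ // m ≤ k} :=
  ⟨fun j => ⟨m + j, Nat.le_add_right m j⟩, fun k => k.1 - m,
   fun j => by simp, fun k => by ext; exact Nat.add_sub_cancel' k.2⟩

open Real in
private lemma tsum_subtype_eq_aux (p : ℝ) (m : ℕ) :
    (∑' k : {k : ℕ // m ≤ k}, ((1:ℝ) + (k.1 : ℝ)) ^ p)
      = ∑' j : ℕ, ((m : ℝ) + j + 1) ^ p := by
  rw [← (shiftEquiv' m).tsum_eq]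
  apply tsum_congr
  intro j
  show ((1:ℝ) + (((shiftEquiv' m) j : ℕ) : ℝ)) ^ p = ((m:ℝ) + j + 1) ^ p
  simp only [shiftEquiv', Equiv.coe_fn_mk]
  congr 1
  push_cast
  ring

open Real in
private lemma calc_aux {a ε q s : ℝ} (hq : 0 < q) {cc : ℝ} (hcc : 0 < cc) {u v : ℝ}
    (hu : 0 < u) (hv : 0 < v) :
    u ^ a / (u ^ (ε*(1+1/q)) * (v ^ s / cc) ^ (1/q))
      = cc ^ (1/q) * u ^ (a - ε*(1+1/q)) * v ^ (-(s/q)) := by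
  have h1 : (v ^ s / cc) ^ (1/q) = v ^ (s/q) / cc ^ (1/q) := by
    rw [Real.div_rpow (Real.rpow_nonneg hv.le _) hcc.le, ← Real.rpow_mul hv.le]
    ring_nf
  have h2 := (Real.rpow_pos_of_pos hu (ε*(1+1/q))).ne'
  have h3 := (Real.rpow_pos_of_pos hcc (1/q)).ne'
  have h4 := (Real.rpow_pos_of_pos hv (s/q)).ne'
  rw [h1, Real.rpow_sub hu, Real.rpow_neg hv.le]
  field_simp



/-- bounds on `β_m` in the polynomial case `μ_n = ν_n = 1 + n`. -/
theorem polynomial_beta_bounds (a ε q : ℝ)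
    (ha : a < 0) (hε : 0 ≤ ε) (hq : 1 < q) (hconv : a * q + ε + 1 < 0) :
    ∀ m : ℕ, 1 ≤ m →
      2 ^ (a + ε / q + 1 / q) * |a * q + ε + 1| ^ (1 / q) *
          ((1 : ℝ) + (m : ℝ)) ^ (-(ε * (1 + 2 / q)) - 1 / q) ≤
        betaSeq (fun n : ℕ => (1 : ℝ) + (n : ℝ)) (fun n : ℕ => (1 : ℝ) + (n : ℝ)) a ε q m ∧
      betaSeq (fun n : ℕ => (1 : ℝ) + (n : ℝ)) (fun n : ℕ => (1 : ℝ) + (n : ℝ)) a ε q m ≤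
        |a * q + ε + 1| ^ (1 / q) / 2 ^ (a - ε * (1 + 1 / q)) *
          ((1 : ℝ) + (m : ℝ)) ^ (-(ε * (1 + 2 / q)) - 1 / q) := by
  intro m hm
  have hq0 : (0:ℝ) < q := by linarith
  have hM1 : (1:ℝ) ≤ (m:ℝ) := by exact_mod_cast hm
  have hM0 : (0:ℝ) < (m:ℝ) := by linarith
  have h1M : (0:ℝ) < 1 + (m:ℝ) := by linarith
  have hp : a * q + ε < -1 := by linarith
  have hcc : (0:ℝ) < -(a * q + ε + 1) := by linarith
  obtain ⟨hg, hSl, hSu⟩ := sum_bounds_aux hp hm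
  set S : ℝ := ∑' j : ℕ, ((m:ℝ) + j + 1) ^ (a * q + ε) with hSdef
  have hS0 : 0 < S := lt_of_lt_of_le (by positivity) hSl
  have habs : |a * q + ε + 1| = -(a * q + ε + 1) := abs_of_neg hconv
  -- rewrite betaSeq
  have hβ : betaSeq (fun n : ℕ => (1:ℝ) + (n:ℝ)) (fun n : ℕ => (1:ℝ) + (n:ℝ)) a ε q m
      = (m:ℝ) ^ a / ((m:ℝ) ^ (ε * (1 + 1/q)) * S ^ (1/q)) := by
    have hbase : (1:ℝ) + ((m-1:ℕ):ℝ) = (m:ℝ) := by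
      rw [Nat.cast_sub hm]; push_cast; ring
    have hmerge : (∑' k : {k : ℕ // m ≤ k},
        ((1:ℝ) + (k.1:ℝ)) ^ (a * q) * ((1:ℝ) + (k.1:ℝ)) ^ ε) = S := by
      rw [hSdef, ← tsum_subtype_eq_aux (a * q + ε) m]
      apply tsum_congr
      intro k
      rw [← Real.rpow_add (by positivity)]
    simp only [betaSeq]
    rw [hbase, hmerge]
  have hε' : 0 ≤ ε * (1 + 1/q) := by positivity
  have ht0 : a - ε * (1 + 1/q) ≤ 0 := by linarith
  have he0 : -(ε * (1 + 2/q)) - 1/q ≤ 0 := by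
    have h1 : 0 ≤ ε * (1 + 2/q) := by positivity
    have h2 : 0 < 1/q := by positivity
    linarith
  have hexp : (a - ε * (1 + 1/q)) + -((a * q + ε + 1)/q) = -(ε * (1 + 2/q)) - 1/q := by
    field_simp
    ring
  constructor
  · -- lower bound
    rw [habs, hβ]
    have hcompare : (m:ℝ) ^ a / ((m:ℝ) ^ (ε * (1 + 1/q)) * ((m:ℝ) ^ (a*q+ε+1) / (-(a*q+ε+1))) ^ (1/q))
        ≤ (m:ℝ) ^ a / ((m:ℝ) ^ (ε * (1 + 1/q)) * S ^ (1/q)) := by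
      gcongr
    have heq : (m:ℝ) ^ a / ((m:ℝ) ^ (ε * (1 + 1/q)) * ((m:ℝ) ^ (a*q+ε+1) / (-(a*q+ε+1))) ^ (1/q))
        = (-(a*q+ε+1)) ^ (1/q) * (m:ℝ) ^ (-(ε * (1 + 2/q)) - 1/q) := by
      rw [calc_aux hq0 hcc hM0 hM0, mul_assoc, ← Real.rpow_add hM0, hexp]
    calc 2 ^ (a + ε/q + 1/q) * (-(a*q+ε+1)) ^ (1/q) * (1 + (m:ℝ)) ^ (-(ε * (1 + 2/q)) - 1/q)
        ≤ 1 * ((-(a*q+ε+1)) ^ (1/q) * (1 + (m:ℝ)) ^ (-(ε * (1 + 2/q)) - 1/q)) := by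
          rw [mul_assoc]
          apply mul_le_mul_of_nonneg_right _ (by positivity)
          apply Real.rpow_le_one_of_one_le_of_nonpos one_le_two
          have hx : a + ε/q + 1/q = (a*q+ε+1)/q := by field_simp
          rw [hx]
          exact le_of_lt (div_neg_of_neg_of_pos hconv hq0)
      _ = (-(a*q+ε+1)) ^ (1/q) * (1 + (m:ℝ)) ^ (-(ε * (1 + 2/q)) - 1/q) := by ring
      _ ≤ (-(a*q+ε+1)) ^ (1/q) * (m:ℝ) ^ (-(ε * (1 + 2/q)) - 1/q) := by
          apply mul_le_mul_of_nonneg_left _ (by positivity)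
          exact Real.rpow_le_rpow_of_nonpos hM0 (by linarith) he0
      _ = (m:ℝ) ^ a / ((m:ℝ) ^ (ε * (1 + 1/q)) * ((m:ℝ) ^ (a*q+ε+1) / (-(a*q+ε+1))) ^ (1/q)) :=
          heq.symm
      _ ≤ _ := hcompare
  · -- upper bound
    rw [habs, hβ]
    have hSl' : ((1:ℝ) + (m:ℝ)) ^ (a*q+ε+1) / (-(a*q+ε+1)) ≤ S := by
      rw [show (1:ℝ) + (m:ℝ) = (m:ℝ) + 1 by ring]
      exact hSl
    have hcompare : (m:ℝ) ^ a / ((m:ℝ) ^ (ε * (1 + 1/q)) * S ^ (1/q))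
        ≤ (m:ℝ) ^ a / ((m:ℝ) ^ (ε * (1 + 1/q)) *
            (((1:ℝ) + (m:ℝ)) ^ (a*q+ε+1) / (-(a*q+ε+1))) ^ (1/q)) := by
      gcongr
    have heq : (m:ℝ) ^ a / ((m:ℝ) ^ (ε * (1 + 1/q)) *
            (((1:ℝ) + (m:ℝ)) ^ (a*q+ε+1) / (-(a*q+ε+1))) ^ (1/q))
        = (-(a*q+ε+1)) ^ (1/q) * (m:ℝ) ^ (a - ε * (1 + 1/q)) *
            ((1:ℝ) + (m:ℝ)) ^ (-((a*q+ε+1)/q)) := calc_aux hq0 hcc hM0 h1M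
    have hmid : (m:ℝ) ^ (a - ε * (1 + 1/q))
        ≤ ((1 + (m:ℝ))/2) ^ (a - ε * (1 + 1/q)) :=
      Real.rpow_le_rpow_of_nonpos (by linarith) (by linarith) ht0
    have hsplit : ((1 + (m:ℝ))/2) ^ (a - ε * (1 + 1/q))
        = (1 + (m:ℝ)) ^ (a - ε * (1 + 1/q)) / 2 ^ (a - ε * (1 + 1/q)) :=
      Real.div_rpow h1M.le (by norm_num) _
    have hcombine : (1 + (m:ℝ)) ^ (a - ε * (1 + 1/q)) * (1 + (m:ℝ)) ^ (-((a*q+ε+1)/q))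
        = (1 + (m:ℝ)) ^ (-(ε * (1 + 2/q)) - 1/q) := by
      rw [← Real.rpow_add h1M, hexp]
    calc (m:ℝ) ^ a / ((m:ℝ) ^ (ε * (1 + 1/q)) * S ^ (1/q))
        ≤ (-(a*q+ε+1)) ^ (1/q) * (m:ℝ) ^ (a - ε * (1 + 1/q)) *
            ((1:ℝ) + (m:ℝ)) ^ (-((a*q+ε+1)/q)) := by
          rw [← heq]; exact hcompare
      _ ≤ (-(a*q+ε+1)) ^ (1/q) * (((1 + (m:ℝ))/2) ^ (a - ε * (1 + 1/q))) *
            ((1:ℝ) + (m:ℝ)) ^ (-((a*q+ε+1)/q)) := by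
          apply mul_le_mul_of_nonneg_right _ (by positivity)
          exact mul_le_mul_of_nonneg_left hmid (by positivity)
      _ = (-(a*q+ε+1)) ^ (1/q) / 2 ^ (a - ε * (1 + 1/q)) *
            ((1 + (m:ℝ)) ^ (a - ε * (1 + 1/q)) * (1 + (m:ℝ)) ^ (-((a*q+ε+1)/q))) := by
          rw [hsplit]; ring
      _ = (-(a*q+ε+1)) ^ (1/q) / 2 ^ (a - ε * (1 + 1/q)) *
            (1 + (m:ℝ)) ^ (-(ε * (1 + 2/q)) - 1/q) := by rw [hcombine]
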